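/- The set F = {z ∈ H : 0 < Re z < 1, |z| > 1, |z-1| > 1} is a fundamental domain for PSL(2,ℤ) acting on the upper half plane H. -/

import Mathlib

/-- Möbius action of an integral special linear matrix on ℂ. -/
noncomputable def moebiusZ (g : Matrix.SpecialLinearGroup (Fin 2) ℤ) (z : ℂ) : ℂ :=
  (((g : Matrix (Fin 2) (Fin 2) ℤ) 0 0 : ℂ) * z + ((g : Matrix (Fin 2) (Fin 2) ℤ) 0 1 : ℂ)) /
    (((g : Matrix (Fin 2) (Fin 2) ℤ) 1 0 : ℂ) * z + ((g : Matrix (Fin 2) (Fin 2) ℤ) 1 1 : ℂ))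

namespace FdAux

def Fset : Set ℂ := {z : ℂ | 0 < z.im ∧ 0 < z.re ∧ z.re < 1 ∧
    1 < ‖z‖ ∧ 1 < ‖z - 1‖}

lemma mem_Fset_iff (z : ℂ) : z ∈ Fset ↔ 0 < z.im ∧ 0 < z.re ∧ z.re < 1 ∧
    1 < z.re^2 + z.im^2 ∧ 1 < (z.re-1)^2 + z.im^2 := by
  have e1 : z.re^2 + z.im^2 = Complex.normSq z := by simp [Complex.normSq_apply]; ring
  have e2 : (z.re-1)^2 + z.im^2 = Complex.normSq (z-1) := by
    simp [Complex.normSq_apply]; ring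
  have h1 : 1 < ‖z‖ ↔ 1 < z.re^2 + z.im^2 := by
    rw [e1, ← Complex.sq_norm]
    constructor <;> intro h <;> nlinarith [norm_nonneg z]
  have h2 : 1 < ‖z-1‖ ↔ 1 < (z.re-1)^2 + z.im^2 := by
    rw [e2, ← Complex.sq_norm]
    constructor <;> intro h <;> nlinarith [norm_nonneg (z-1)]
  rw [Fset, Set.mem_setOf_eq, h1, h2]

set_option maxHeartbeats 1000000 in
lemma one_lt_abs_linear {z : ℂ} (hz : z ∈ Fset) {c d : ℤ} (hc : c ≠ 0) :
    1 < ‖(c:ℂ)*z + d‖ := by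
  have hre : ((c:ℂ)*z + (d:ℂ)).re = c*z.re + d := by simp
  have him : ((c:ℂ)*z + (d:ℂ)).im = c*z.im := by simp
  have key : 1 < ((c:ℝ)*z.re + d)^2 + ((c:ℝ)*z.im)^2 := by
    rw [mem_Fset_iff] at hz
    obtain ⟨h0, h1, h2, h3, h4⟩ := hz
    have h34 : 3/4 < z.im^2 := by
      rcases le_total z.re (1/2) with h | h
      · nlinarith
      · nlinarith
    have : c ≤ -2 ∨ c = -1 ∨ c = 1 ∨ 2 ≤ c := by omega
    have hbig : (c ≤ -2 ∨ 2 ≤ c) → 1 < ((c:ℝ)*z.re + d)^2 + ((c:ℝ)*z.im)^2 := by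
      intro hcc
      have hc4 : 4 ≤ (c:ℝ)^2 := by
        rcases hcc with h | h
        · have : (c:ℝ) ≤ -2 := by exact_mod_cast h
          nlinarith
        · have : (2:ℝ) ≤ c := by exact_mod_cast h
          nlinarith
      have h3' : 3 < (c:ℝ)^2 * z.im^2 := by nlinarith
      nlinarith [sq_nonneg ((c:ℝ)*z.re + d)]
    rcases this with h | rfl | rfl | h
    · exact hbig (Or.inl h)
    · push_cast
      have hd : d ≤ -1 ∨ d = 0 ∨ d = 1 ∨ 2 ≤ d := by omega
      rcases hd with h | rfl | rfl | h
      · have : (d:ℝ) ≤ -1 := by exact_mod_cast h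
        nlinarith [sq_nonneg (-z.re + (d:ℝ) + 1)]
      · push_cast; nlinarith
      · push_cast; nlinarith
      · have : (2:ℝ) ≤ d := by exact_mod_cast h
        nlinarith [sq_nonneg (-z.re + (d:ℝ) - 1)]
    · push_cast
      have hd : d ≤ -2 ∨ d = -1 ∨ d = 0 ∨ 1 ≤ d := by omega
      rcases hd with h | rfl | rfl | h
      · have : (d:ℝ) ≤ -2 := by exact_mod_cast h
        nlinarith [sq_nonneg (z.re + (d:ℝ) + 1)]
      · push_cast; nlinarith
      · push_cast; nlinarith
      · have : (1:ℝ) ≤ d := by exact_mod_cast h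
        nlinarith [sq_nonneg (z.re + (d:ℝ) - 1)]
    · exact hbig (Or.inr h)
  have hnsq : 1 < Complex.normSq ((c:ℂ)*z + d) := by
    rw [Complex.normSq_apply, hre, him]; nlinarith
  nlinarith [Complex.sq_norm ((c:ℂ)*z + d), norm_nonneg ((c:ℂ)*z + d)]

lemma isOpen_Fset : IsOpen Fset := by
  have : Fset = {z : ℂ | 0 < z.im} ∩ ({z | 0 < z.re} ∩ ({z | z.re < 1} ∩
      ({z | 1 < ‖z‖} ∩ {z | 1 < ‖z-1‖}))) := rfl
  rw [this]
  exact (isOpen_lt continuous_const Complex.continuous_im).inter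
    ((isOpen_lt continuous_const Complex.continuous_re).inter
      ((isOpen_lt Complex.continuous_re continuous_const).inter
        ((isOpen_lt continuous_const continuous_norm).inter
          (isOpen_lt continuous_const
            (continuous_norm.comp (continuous_id.sub continuous_const))))))

def Lset : Set ℂ := ({w : ℂ | 0 < w.re} ∩ {w : ℂ | w.re < 1}) ∩ {w : ℂ | 1 < w.im}

def ray (z : ℂ) : Set ℂ := ({w : ℂ | w.re ≤ z.re} ∩ {w : ℂ | z.re ≤ w.re}) ∩ {w : ℂ | z.im ≤ w.im}

lemma Lset_subset : Lset ⊆ Fset := by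
  rintro w ⟨⟨h1, h2⟩, h3⟩
  simp only [Set.mem_setOf_eq] at h1 h2 h3
  rw [mem_Fset_iff]
  refine ⟨by linarith, h1, h2, by nlinarith, by nlinarith⟩

lemma ray_subset {z : ℂ} (hz : z ∈ Fset) : ray z ⊆ Fset := by
  rintro w ⟨⟨h1, h2⟩, h3⟩
  simp only [Set.mem_setOf_eq] at h1 h2 h3
  have hre : w.re = z.re := le_antisymm h1 h2
  rw [mem_Fset_iff] at hz ⊢
  obtain ⟨p0, p1, p2, p3, p4⟩ := hz
  rw [hre]
  refine ⟨by linarith, p1, p2, by nlinarith, by nlinarith⟩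

lemma isConnected_Fset : IsConnected Fset := by
  have hLconv : Convex ℝ Lset :=
    Convex.inter (Convex.inter (convex_halfSpace_re_gt 0) (convex_halfSpace_re_lt 1))
      (convex_halfSpace_im_gt 1)
  have hrayconv : ∀ z : ℂ, Convex ℝ (ray z) := fun z =>
    Convex.inter (Convex.inter (convex_halfSpace_re_le z.re) (convex_halfSpace_re_ge z.re))
      (convex_halfSpace_im_ge z.im)
  have hc0 : ((1/2 : ℝ) + 2*Complex.I : ℂ) ∈ Lset := by
    refine ⟨⟨?_, ?_⟩, ?_⟩ <;> simp <;> norm_num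
  have hunion : Fset = ⋃ z : {w : ℂ // w ∈ Fset}, (ray (z : ℂ) ∪ Lset) := by
    apply Set.Subset.antisymm
    · intro w hw
      refine Set.mem_iUnion.mpr ⟨⟨w, hw⟩, Or.inl ?_⟩
      exact ⟨⟨le_refl w.re, le_refl w.re⟩, le_refl w.im⟩
    · intro w hw
      obtain ⟨z, hz⟩ := Set.mem_iUnion.mp hw
      rcases hz with h | h
      · exact ray_subset z.2 h
      · exact Lset_subset h
  constructor
  · exact ⟨_, Lset_subset hc0⟩
  · rw [hunion]
    apply isPreconnected_iUnion
    · refine ⟨(1/2 : ℝ) + 2*Complex.I, ?_⟩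
      rw [Set.mem_iInter]
      exact fun z => Or.inr hc0
    · intro z
      have hzF := (mem_Fset_iff _).mp z.2
      -- meeting point: (z.re : ℂ) + (z.im + 2) * I
      apply IsPreconnected.union ((z.1.re : ℝ) + (z.1.im + 2)*Complex.I)
      · refine ⟨⟨?_, ?_⟩, ?_⟩ <;> simp <;> linarith [hzF.1]
      · refine ⟨⟨?_, ?_⟩, ?_⟩ <;> simp <;> linarith [hzF.1, hzF.2.1, hzF.2.2.1]
      · exact (hrayconv _).isPreconnected
      · exact hLconv.isPreconnected

set_option maxHeartbeats 1000000 in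
lemma step_mem {x y t : ℝ} (h0 : 0 < y) (h1 : 0 ≤ x) (h2 : x ≤ 1)
    (h3 : 1 ≤ x^2 + y^2) (h4 : 1 ≤ (x-1)^2 + y^2) (ht0 : 0 < t) (ht1 : t ≤ 1) :
    0 < y + t ∧ 0 < x + t*(1/2 - x) ∧ x + t*(1/2 - x) < 1 ∧
      1 < (x + t*(1/2-x))^2 + (y+t)^2 ∧ 1 < (x + t*(1/2-x) - 1)^2 + (y+t)^2 := by
  have hq1 : 0 ≤ (1-t)*x := mul_nonneg (by linarith) h1
  have hq2 : 0 ≤ (1-t)*(1-x) := mul_nonneg (by linarith) (by linarith)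
  have e3 : y^2 < (y+t)^2 := by nlinarith
  refine ⟨by linarith, by nlinarith, by nlinarith, ?_, ?_⟩
  · rcases le_total x (1/2) with h | h
    · have e1 : x ≤ x + t*(1/2-x) := by nlinarith
      have e2 : x^2 ≤ (x + t*(1/2-x))^2 := by nlinarith
      linarith
    · have e1 : (1/2 : ℝ) ≤ x + t*(1/2-x) := by nlinarith
      have e2 : 3/4 ≤ y^2 := by nlinarith
      have e4 : 1/4 ≤ (x + t*(1/2-x))^2 := by nlinarith
      linarith
  · rcases le_total x (1/2) with h | h
    · have e1 : x + t*(1/2-x) - 1 ≤ -(1/2 : ℝ) := by nlinarith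
      have e2 : 3/4 ≤ y^2 := by nlinarith
      have e4 : 1/4 ≤ (x + t*(1/2-x) - 1)^2 := by nlinarith
      linarith
    · have hq3 : 0 ≤ t*(x-1/2) := mul_nonneg ht0.le (by linarith)
      have e1 : x + t*(1/2-x) - 1 ≤ x - 1 := by linarith
      have e1' : (0:ℝ) ≤ -(x + t*(1/2-x) - 1) - (x-1) := by linarith
      have e2 : (x - 1)^2 ≤ (x + t*(1/2-x) - 1)^2 := by
        nlinarith [mul_nonneg (by linarith : (0:ℝ) ≤ (x-1) - (x + t*(1/2-x) - 1)) e1']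
      linarith

lemma step_mem_c {p : ℂ} (h0 : 0 < p.im) (h1 : 0 ≤ p.re) (h2 : p.re ≤ 1)
    (h3 : 1 ≤ p.re^2 + p.im^2) (h4 : 1 ≤ (p.re-1)^2 + p.im^2) {t : ℝ}
    (ht0 : 0 < t) (ht1 : t ≤ 1) :
    p + (t:ℂ) * (((1/2 - p.re : ℝ) : ℂ) + Complex.I) ∈ Fset := by
  have hre : (p + (t:ℂ) * (((1/2 - p.re : ℝ) : ℂ) + Complex.I)).re
      = p.re + t*(1/2 - p.re) := by
    simp only [Complex.add_re, Complex.mul_re, Complex.ofReal_re, Complex.ofReal_im,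
      Complex.I_re, Complex.I_im]
    ring
  have him : (p + (t:ℂ) * (((1/2 - p.re : ℝ) : ℂ) + Complex.I)).im = p.im + t := by
    simp only [Complex.add_im, Complex.mul_im, Complex.ofReal_re, Complex.ofReal_im,
      Complex.I_re, Complex.I_im]
    ring
  have key := step_mem h0 h1 h2 h3 h4 ht0 ht1
  rw [mem_Fset_iff, hre, him]
  exact key

lemma mem_closure_Fset {p : ℂ} (h0 : 0 < p.im) (h1 : 0 ≤ p.re) (h2 : p.re ≤ 1)
    (h3 : 1 ≤ p.re^2 + p.im^2) (h4 : 1 ≤ (p.re-1)^2 + p.im^2) : p ∈ closure Fset := by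
  have htend : Filter.Tendsto
      (fun n : ℕ => p + (((1:ℝ)/(n+1) : ℝ) : ℂ) * (((1/2 - p.re : ℝ) : ℂ) + Complex.I))
      Filter.atTop (nhds p) := by
    have t1 : Filter.Tendsto (fun n : ℕ => (((1:ℝ)/(n+1) : ℝ) : ℂ)) Filter.atTop (nhds 0) := by
      have := (Complex.continuous_ofReal.tendsto 0).comp tendsto_one_div_add_atTop_nhds_zero_nat
      simpa [Function.comp_def] using this
    have := Filter.Tendsto.const_add p
      (t1.mul_const (((1/2 - p.re : ℝ) : ℂ) + Complex.I))
    simpa using this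
  apply mem_closure_of_tendsto htend
  filter_upwards with n
  have ht0 : 0 < (1:ℝ)/(n+1) := by positivity
  have ht1 : (1:ℝ)/(n+1) ≤ 1 := by
    rw [div_le_one (by positivity)]
    linarith [Nat.cast_nonneg (α := ℝ) n]
  exact step_mem_c h0 h1 h2 h3 h4 ht0 ht1

lemma moebiusZ_eq_smul (g : Matrix.SpecialLinearGroup (Fin 2) ℤ) (z : UpperHalfPlane) :
    moebiusZ g (z : ℂ) = ((g • z : UpperHalfPlane) : ℂ) := by
  rw [UpperHalfPlane.specialLinearGroup_apply]
  simp only [moebiusZ, UpperHalfPlane.coe_mk, eq_intCast (algebraMap ℤ ℝ)]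
  push_cast
  ring

lemma disjoint_translate (g : Matrix.SpecialLinearGroup (Fin 2) ℤ) (hg1 : g ≠ 1)
    (hgm1 : g ≠ -1) : (moebiusZ g '' Fset) ∩ Fset = ∅ := by
  rw [Set.eq_empty_iff_forall_notMem]
  rintro w ⟨⟨z, hzF, rfl⟩, hwF⟩
  have hdet : (g : Matrix (Fin 2) (Fin 2) ℤ) 0 0 * (g : Matrix (Fin 2) (Fin 2) ℤ) 1 1 -
      (g : Matrix (Fin 2) (Fin 2) ℤ) 0 1 * (g : Matrix (Fin 2) (Fin 2) ℤ) 1 0 = 1 := by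
    have h := g.prop
    rwa [Matrix.det_fin_two] at h
  set a := (g : Matrix (Fin 2) (Fin 2) ℤ) 0 0 with ha
  set b := (g : Matrix (Fin 2) (Fin 2) ℤ) 0 1 with hb
  set c := (g : Matrix (Fin 2) (Fin 2) ℤ) 1 0 with hc
  set d := (g : Matrix (Fin 2) (Fin 2) ℤ) 1 1 with hd
  have hmz : moebiusZ g z = ((a:ℂ)*z + b)/((c:ℂ)*z + d) := rfl
  by_cases hc0 : c = 0
  · have had : a * d = 1 := by rw [hc0] at hdet; omega
    obtain ⟨p0, p1, p2, _, _⟩ := (mem_Fset_iff z).mp hzF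
    obtain ⟨q0, q1, q2, _, _⟩ := (mem_Fset_iff _).mp hwF
    rcases Int.mul_eq_one_iff_eq_one_or_neg_one.mp had with ⟨ha1, hd1⟩ | ⟨ha1, hd1⟩
    · have hweq : moebiusZ g z = z + b := by
        rw [hmz, hc0, ha1, hd1]; push_cast; simp
      rw [hweq] at q1 q2
      simp only [Complex.add_re, Complex.intCast_re] at q1 q2
      have hb0 : b = 0 := by
        have l1 : (-1 : ℝ) < (b:ℝ) := by linarith
        have l2 : (b:ℝ) < 1 := by linarith
        have m1 : (-1 : ℤ) < b := by exact_mod_cast l1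
        have m2 : b < 1 := by exact_mod_cast l2
        omega
      apply hg1
      apply Subtype.coe_injective
      have hmat : (g : Matrix (Fin 2) (Fin 2) ℤ) = 1 := by
        rw [Matrix.eta_fin_two (g : Matrix (Fin 2) (Fin 2) ℤ), ← ha, ← hb, ← hc, ← hd,
          ha1, hb0, hc0, hd1]
        symm
        exact Matrix.one_fin_two
      show (g : Matrix (Fin 2) (Fin 2) ℤ) = ((1 : Matrix.SpecialLinearGroup (Fin 2) ℤ) :
        Matrix (Fin 2) (Fin 2) ℤ)
      rw [hmat]
      simp
    · have hweq : moebiusZ g z = z - b := by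
        rw [hmz, hc0, ha1, hd1]
        push_cast
        rw [div_eq_iff (by norm_num : (0:ℂ)*z + -1 ≠ 0)]
        ring
      rw [hweq] at q1 q2
      simp only [Complex.sub_re, Complex.intCast_re] at q1 q2
      have hb0 : b = 0 := by
        have l1 : (b:ℝ) < 1 := by linarith
        have l2 : (-1 : ℝ) < (b:ℝ) := by linarith
        have m1 : b < 1 := by exact_mod_cast l1
        have m2 : (-1 : ℤ) < b := by exact_mod_cast l2
        omega
      apply hgm1
      apply Subtype.coe_injective
      have hmat : (g : Matrix (Fin 2) (Fin 2) ℤ) = -1 := by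
        rw [Matrix.eta_fin_two (g : Matrix (Fin 2) (Fin 2) ℤ), ← ha, ← hb, ← hc, ← hd,
          ha1, hb0, hc0, hd1]
        ext i j
        fin_cases i <;> fin_cases j <;> simp
      show (g : Matrix (Fin 2) (Fin 2) ℤ) = ((-1 : Matrix.SpecialLinearGroup (Fin 2) ℤ) :
        Matrix (Fin 2) (Fin 2) ℤ)
      rw [hmat]
      simp
  · have hzim : 0 < z.im := ((mem_Fset_iff z).mp hzF).1
    have hden : (c:ℂ)*z + d ≠ 0 := by
      intro h
      have h' := congrArg Complex.im h
      simp only [Complex.add_im, Complex.mul_im, Complex.intCast_im, Complex.intCast_re,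
        Complex.zero_im, zero_mul, add_zero, mul_zero, zero_add] at h'
      have hcr : (c:ℝ) ≠ 0 := Int.cast_ne_zero.mpr hc0
      rcases mul_eq_zero.mp h' with h'' | h''
      · exact hcr h''
      · exact (ne_of_gt hzim) h''
    have hdetC : (a:ℂ)*d - b*c = 1 := by exact_mod_cast hdet
    have hkey : (-(c:ℂ)) * (moebiusZ g z) + a = ((c:ℂ)*z + d)⁻¹ := by
      rw [hmz]
      field_simp
      linear_combination hdetC
    have h1 := one_lt_abs_linear (c := c) (d := d) hzF hc0
    have h2 := one_lt_abs_linear (c := -c) (d := a) hwF (neg_ne_zero.mpr hc0)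
    rw [Int.cast_neg, hkey, norm_inv] at h2
    have habs : 0 < ‖(c:ℂ)*z + d‖ := norm_pos_iff.mpr hden
    have hmul := mul_inv_cancel₀ (ne_of_gt habs)
    nlinarith

lemma surj_helper (t : UpperHalfPlane) (g : Matrix.SpecialLinearGroup (Fin 2) ℤ)
    (hg : g • t ∈ ModularGroup.fd) :
    ∃ g' : Matrix.SpecialLinearGroup (Fin 2) ℤ, moebiusZ g' (t : ℂ) ∈ closure Fset := by
  obtain ⟨hn, hr⟩ := hg
  rw [abs_le] at hr
  set w : UpperHalfPlane := g • t with hw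
  have hnsq : 1 ≤ (w:ℂ).re^2 + (w:ℂ).im^2 := by
    rw [Complex.normSq_apply] at hn
    nlinarith [hn]
  have him : 0 < (w:ℂ).im := w.2
  have hre1 : w.re = (w:ℂ).re := rfl
  rw [hre1] at hr
  rcases le_or_gt 0 (w:ℂ).re with h | h
  · refine ⟨g, ?_⟩
    rw [moebiusZ_eq_smul g t]
    exact mem_closure_Fset him h (by linarith [hr.2]) hnsq (by nlinarith [hr.2])
  · refine ⟨ModularGroup.T * g, ?_⟩
    have hsm : (ModularGroup.T * g) • t = ModularGroup.T • w := mul_smul _ _ _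
    rw [moebiusZ_eq_smul (ModularGroup.T * g) t, hsm, UpperHalfPlane.modular_T_smul,
      UpperHalfPlane.coe_vadd]
    have e1 : (((1:ℝ) : ℂ) + (w:ℂ)).re = 1 + (w:ℂ).re := by simp
    have e2 : (((1:ℝ) : ℂ) + (w:ℂ)).im = (w:ℂ).im := by simp
    apply mem_closure_Fset <;> simp only [e1, e2]
    · exact him
    · linarith [hr.1]
    · linarith
    · nlinarith [hr.1]
    · nlinarith

lemma surj_translates (z : ℂ) (hz : 0 < z.im) :
    ∃ g : Matrix.SpecialLinearGroup (Fin 2) ℤ, moebiusZ g z ∈ closure Fset := by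
  obtain ⟨g, hg⟩ := ModularGroup.exists_smul_mem_fd ⟨z, hz⟩
  exact surj_helper ⟨z, hz⟩ g hg

end FdAux

/-- F = {z ∈ H : 0 < Re z < 1, |z| > 1, |z-1| > 1} is a fundamental
domain for PSL(2,ℤ) on H: it is open and connected, g·F ∩ F = ∅ for every element of
SL(2,ℤ) not representing the identity of PSL(2,ℤ) (i.e. g ≠ ±1), and every point of H
lies in some PSL(2,ℤ)-translate of the closure of F. -/
theorem F_fundamental_domain_PSL2Z :
    IsOpen {z : ℂ | 0 < z.im ∧ 0 < z.re ∧ z.re < 1 ∧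
        1 < ‖z‖ ∧ 1 < ‖z - 1‖} ∧
    IsConnected {z : ℂ | 0 < z.im ∧ 0 < z.re ∧ z.re < 1 ∧
        1 < ‖z‖ ∧ 1 < ‖z - 1‖} ∧
    (∀ g : Matrix.SpecialLinearGroup (Fin 2) ℤ, g ≠ 1 → g ≠ -1 →
      (moebiusZ g '' {z : ℂ | 0 < z.im ∧ 0 < z.re ∧ z.re < 1 ∧
          1 < ‖z‖ ∧ 1 < ‖z - 1‖}) ∩
        {z : ℂ | 0 < z.im ∧ 0 < z.re ∧ z.re < 1 ∧
          1 < ‖z‖ ∧ 1 < ‖z - 1‖} = ∅) ∧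
    (∀ z : ℂ, 0 < z.im → ∃ g : Matrix.SpecialLinearGroup (Fin 2) ℤ,
      moebiusZ g z ∈ closure {z : ℂ | 0 < z.im ∧ 0 < z.re ∧ z.re < 1 ∧
        1 < ‖z‖ ∧ 1 < ‖z - 1‖}) :=
  ⟨FdAux.isOpen_Fset, FdAux.isConnected_Fset, FdAux.disjoint_translate, FdAux.surj_translates⟩
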